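/- Let f : ℝ^n → ℝ be twice continuously differentiable and μ-strongly convex with μ > 0, g : ℝ^n → (-∞, ∞] a proper closed convex function, ν > 0, and let x* satisfy F_ν(x*) = 0. Suppose ∂_B prox_{νg} is a linear Newton approximation of prox_{νg} at x* − ν∇f(x*), i.e., ‖prox_{νg}(x* − ν∇f(x*)) − prox_{νg}(z) − V((x* − ν∇f(x*)) − z)‖₂ = o(‖(x* − ν∇f(x*)) − z‖₂) as z → x* − ν∇f(x*), uniformly over V ∈ ∂_B prox_{νg}(z). Then there exist ε > 0 and Δ > 0 such that: for every sequence (x^(k)) and matrices (B^(k)) with ‖x^(1) − x*‖₂ < ε, ‖B^(k) − ∇²f(x^(k))‖ < Δ for all k, and x^(k+1) = x^(k) − W_k^{-1} F_ν(x^(k)) where W_k = I − V_k(I − ν B^(k)) for some V_k ∈ ∂_B prox_{νg}(x^(k) − ν∇f(x^(k))), each W_k is invertible and ‖x^(k+1) − x*‖₂ ≤ (1/2)‖x^(k) − x*‖₂ for all k; in particular x^(k) converges to x* at least linearly. -/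

import Mathlib

open Filter Topology RealInnerProductSpace

/-- The B-subdifferential of a map `F : ℝ^n → ℝ^n` at `x`: the set of limits of
derivatives `∇F(x^(k))` along sequences `x^(k) → x` of differentiability points of `F`. -/
def Bsubdiff {n : ℕ} (F : EuclideanSpace ℝ (Fin n) → EuclideanSpace ℝ (Fin n))
    (x : EuclideanSpace ℝ (Fin n)) :
    Set (EuclideanSpace ℝ (Fin n) →L[ℝ] EuclideanSpace ℝ (Fin n)) :=
  {V | ∃ u : ℕ → EuclideanSpace ℝ (Fin n),
      Filter.Tendsto u Filter.atTop (nhds x) ∧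
      (∀ k, DifferentiableAt ℝ F (u k)) ∧
      Filter.Tendsto (fun k => fderiv ℝ F (u k)) Filter.atTop (nhds V)}

/-- The proximal-gradient residual `F_ν(x) = x − prox_{νg}(x − ν ∇f(x))`,
where `prox` denotes the proximal map of `νg`. -/
noncomputable def Fnu {n : ℕ} (f : EuclideanSpace ℝ (Fin n) → ℝ)
    (prox : EuclideanSpace ℝ (Fin n) → EuclideanSpace ℝ (Fin n)) (ν : ℝ)
    (x : EuclideanSpace ℝ (Fin n)) : EuclideanSpace ℝ (Fin n) :=
  x - prox (x - ν • gradient f x)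


lemma firm_nonexp {n : ℕ} (g : EuclideanSpace ℝ (Fin n) → EReal)
    (hg_nebot : ∀ x, g x ≠ ⊥) (hg_proper : ∃ x, g x ≠ ⊤)
    (hg_conv : ∀ x y : EuclideanSpace ℝ (Fin n), ∀ a b : ℝ, 0 ≤ a → 0 ≤ b → a + b = 1 →
      g (a • x + b • y) ≤ (a : EReal) * g x + (b : EReal) * g y)
    (ν : ℝ) (hν : 0 < ν)
    (prox : EuclideanSpace ℝ (Fin n) → EuclideanSpace ℝ (Fin n))
    (hprox : ∀ w, IsMinOn
      (fun z => (ν : EReal) * g z + ((‖z - w‖ ^ 2 / 2 : ℝ) : EReal)) Set.univ (prox w)) :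
    ∀ w1 w2, ‖prox w1 - prox w2‖ ^ 2 ≤ ⟪w1 - w2, prox w1 - prox w2⟫ := by
  have hfin : ∀ w, ∃ a : ℝ, g (prox w) = (a : EReal) := by
    intro w
    obtain ⟨x0, hx0⟩ := hg_proper
    obtain ⟨a0, ha0⟩ : ∃ a0 : ℝ, g x0 = (a0 : EReal) :=
      ⟨(g x0).toReal, (EReal.coe_toReal hx0 (hg_nebot x0)).symm⟩
    have hmin := (isMinOn_iff.mp (hprox w)) x0 (Set.mem_univ x0)
    rw [ha0, ← EReal.coe_mul, ← EReal.coe_add] at hmin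
    have htop : g (prox w) ≠ ⊤ := by
      intro h
      rw [h, EReal.coe_mul_top_of_pos hν, EReal.top_add_coe] at hmin
      exact absurd hmin (not_le.mpr (EReal.coe_lt_top _))
    exact ⟨(g (prox w)).toReal, (EReal.coe_toReal htop (hg_nebot _)).symm⟩
  have hmin : ∀ w z (a b : ℝ), g (prox w) = (a : EReal) → g z ≤ (b : EReal) →
      ν * a + ‖prox w - w‖ ^ 2 / 2 ≤ ν * b + ‖z - w‖ ^ 2 / 2 := by
    intro w z a b ha hb
    have hmin := (isMinOn_iff.mp (hprox w)) z (Set.mem_univ z)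
    rw [ha, ← EReal.coe_mul, ← EReal.coe_add] at hmin
    have h2 : (ν : EReal) * g z ≤ (ν : EReal) * (b : EReal) :=
      mul_le_mul_of_nonneg_left hb (by exact_mod_cast hν.le)
    have h3 : (ν : EReal) * g z + ((‖z - w‖ ^ 2 / 2 : ℝ) : EReal)
        ≤ ((ν * b + ‖z - w‖ ^ 2 / 2 : ℝ) : EReal) := by
      rw [EReal.coe_add, EReal.coe_mul]
      exact add_le_add_left h2 _
    exact_mod_cast le_trans hmin h3
  intro w1 w2
  obtain ⟨a1, ha1⟩ := hfin w1
  obtain ⟨a2, ha2⟩ := hfin w2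
  set p1 := prox w1 with hp1
  set p2 := prox w2 with hp2
  have key : ∀ t : ℝ, 0 < t → t < 1 →
      ‖p1 - p2‖ ^ 2 ≤ ⟪w1 - w2, p1 - p2⟫ + t * ‖p1 - p2‖ ^ 2 := by
    intro t ht0 ht1
    have hcomb1 : g (p1 + t • (p2 - p1)) ≤ (((1 - t) * a1 + t * a2 : ℝ) : EReal) := by
      have h := hg_conv p1 p2 (1 - t) t (by linarith) ht0.le (by ring)
      have heq : (1 - t) • p1 + t • p2 = p1 + t • (p2 - p1) := by module
      rw [heq, ha1, ha2, ← EReal.coe_mul, ← EReal.coe_mul, ← EReal.coe_add] at h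
      exact h
    have hcomb2 : g (p2 + t • (p1 - p2)) ≤ (((1 - t) * a2 + t * a1 : ℝ) : EReal) := by
      have h := hg_conv p2 p1 (1 - t) t (by linarith) ht0.le (by ring)
      have heq : (1 - t) • p2 + t • p1 = p2 + t • (p1 - p2) := by module
      rw [heq, ha1, ha2, ← EReal.coe_mul, ← EReal.coe_mul, ← EReal.coe_add] at h
      exact h
    have I1 := hmin w1 (p1 + t • (p2 - p1)) a1 ((1 - t) * a1 + t * a2) ha1 hcomb1
    have I2 := hmin w2 (p2 + t • (p1 - p2)) a2 ((1 - t) * a2 + t * a1) ha2 hcomb2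
    rw [← hp1] at I1
    rw [← hp2] at I2
    have e1 : ‖p1 + t • (p2 - p1) - w1‖ ^ 2
        = ‖p1 - w1‖ ^ 2 + 2 * (t * ⟪p1 - w1, p2 - p1⟫) + t ^ 2 * ‖p2 - p1‖ ^ 2 := by
      have h : p1 + t • (p2 - p1) - w1 = (p1 - w1) + t • (p2 - p1) := by module
      rw [h, norm_add_sq_real, real_inner_smul_right, norm_smul]
      rw [Real.norm_eq_abs, mul_pow, sq_abs]
    have e2 : ‖p2 + t • (p1 - p2) - w2‖ ^ 2
        = ‖p2 - w2‖ ^ 2 + 2 * (t * ⟪p2 - w2, p1 - p2⟫) + t ^ 2 * ‖p1 - p2‖ ^ 2 := by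
      have h : p2 + t • (p1 - p2) - w2 = (p2 - w2) + t • (p1 - p2) := by module
      rw [h, norm_add_sq_real, real_inner_smul_right, norm_smul]
      rw [Real.norm_eq_abs, mul_pow, sq_abs]
    rw [e1] at I1
    rw [e2] at I2
    have j1 : ⟪p1 - w1, p2 - p1⟫ + ⟪p2 - w2, p1 - p2⟫
        = ⟪w1 - w2, p1 - p2⟫ - ‖p1 - p2‖ ^ 2 := by
      simp only [inner_sub_left, inner_sub_right]
      have c1 := real_inner_comm p1 p2
      have c2 := real_inner_comm w1 p1
      have c3 := real_inner_comm w1 p2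
      have c4 := real_inner_comm w2 p1
      have c5 := real_inner_comm w2 p2
      have c6 := real_inner_comm p1 p1
      have c7 := real_inner_comm p2 p2
      have e : ‖p1 - p2‖ ^ 2 = ⟪p1, p1⟫ - ⟪p1, p2⟫ - (⟪p2, p1⟫ - ⟪p2, p2⟫) := by
        rw [← real_inner_self_eq_norm_sq]
        simp only [inner_sub_left, inner_sub_right]
        linarith [real_inner_comm p1 p2]
      rw [e]
      linarith
    have hnn : ‖p2 - p1‖ ^ 2 = ‖p1 - p2‖ ^ 2 := by rw [norm_sub_rev]
    rw [hnn] at I1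
    nlinarith [I1, I2, j1]
  by_contra hcon
  push_neg at hcon
  set A := ‖p1 - p2‖ ^ 2 with hA
  set C := ⟪w1 - w2, p1 - p2⟫ with hC
  have h12 := key (1/2) (by norm_num) (by norm_num)
  have hApos : 0 < A := by
    rcases lt_or_eq_of_le (sq_nonneg ‖p1 - p2‖) with h | h
    · exact h
    · exfalso; rw [← hA] at h; linarith
  set t := (A - C) / (2 * A) with ht
  have ht0 : 0 < t := div_pos (by linarith) (by linarith)
  have ht1 : t < 1 := by
    rw [ht, div_lt_one (by linarith)]
    linarith
  have hkt := key t ht0 ht1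
  have heval : t * A = (A - C) / 2 := by
    rw [ht]; field_simp
  linarith

lemma fderiv_firm {n : ℕ}
    (prox : EuclideanSpace ℝ (Fin n) → EuclideanSpace ℝ (Fin n))
    (hfirm : ∀ w1 w2, ‖prox w1 - prox w2‖ ^ 2 ≤ ⟪w1 - w2, prox w1 - prox w2⟫)
    (u : EuclideanSpace ℝ (Fin n)) (hdiff : DifferentiableAt ℝ prox u)
    (h : EuclideanSpace ℝ (Fin n)) :
    ‖fderiv ℝ prox u h‖ ^ 2 ≤ ⟪h, fderiv ℝ prox u h⟫ := by
  set D := fderiv ℝ prox u with hD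
  set F : ℝ → EuclideanSpace ℝ (Fin n) := fun t => prox (u + t • h) with hF
  have hline : HasDerivAt (fun t : ℝ => u + t • h) h 0 := by
    simpa using ((hasDerivAt_id (0:ℝ)).smul_const h).const_add u
  have hcomp : HasDerivAt F (D h) 0 := by
    have hD' : HasFDerivAt prox D ((fun t : ℝ => u + t • h) 0) := by
      simpa using hdiff.hasFDerivAt
    exact hD'.comp_hasDerivAt (0:ℝ) hline
  have hslope := hasDerivAt_iff_tendsto_slope.mp hcomp
  have hmono : 𝓝[>] (0:ℝ) ≤ 𝓝[≠] (0:ℝ) :=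
    nhdsWithin_mono _ (fun t ht => ne_of_gt ht)
  have hslope' : Tendsto (slope F 0) (𝓝[>] (0:ℝ)) (𝓝 (D h)) := hslope.mono_left hmono
  have h1 : Tendsto (fun t => ⟪h, slope F 0 t⟫ - ‖slope F 0 t‖ ^ 2) (𝓝[>] (0:ℝ))
      (𝓝 (⟪h, D h⟫ - ‖D h‖ ^ 2)) :=
    (tendsto_const_nhds.inner hslope').sub ((hslope'.norm).pow 2)
  have h2 : ∀ᶠ t in 𝓝[>] (0:ℝ), 0 ≤ ⟪h, slope F 0 t⟫ - ‖slope F 0 t‖ ^ 2 := by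
    filter_upwards [self_mem_nhdsWithin] with t ht
    have ht0 : (0:ℝ) < t := ht
    have hkey := hfirm (u + t • h) u
    rw [add_sub_cancel_left, real_inner_smul_left] at hkey
    have hsl : slope F 0 t = t⁻¹ • (prox (u + t • h) - prox u) := by
      simp [slope, hF]
    rw [hsl, real_inner_smul_right, norm_smul, Real.norm_eq_abs,
      abs_of_pos (inv_pos.mpr ht0), mul_pow]
    have h3 : ‖prox (u + t • h) - prox u‖ ^ 2 ≤ t * ⟪h, prox (u + t • h) - prox u⟫ := hkey
    have ht2 : (0:ℝ) < t⁻¹ ^ 2 := by positivity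
    have h4 := mul_le_mul_of_nonneg_left h3 ht2.le
    have h5 : t⁻¹ ^ 2 * (t * ⟪h, prox (u + t • h) - prox u⟫)
        = t⁻¹ * ⟪h, prox (u + t • h) - prox u⟫ := by
      field_simp
    linarith
  have := ge_of_tendsto h1 h2
  linarith
lemma bsubdiff_firm {n : ℕ}
    (prox : EuclideanSpace ℝ (Fin n) → EuclideanSpace ℝ (Fin n))
    (hderiv : ∀ u, DifferentiableAt ℝ prox u →
      ∀ h, ‖fderiv ℝ prox u h‖ ^ 2 ≤ ⟪h, fderiv ℝ prox u h⟫)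
    (z : EuclideanSpace ℝ (Fin n))
    (V : EuclideanSpace ℝ (Fin n) →L[ℝ] EuclideanSpace ℝ (Fin n))
    (hV : V ∈ Bsubdiff prox z) :
    ∀ h, ‖V h‖ ^ 2 ≤ ⟪h, V h⟫ := by
  obtain ⟨u, -, hdiff, htend⟩ := hV
  intro h
  have happ : Tendsto (fun k => fderiv ℝ prox (u k) h) atTop (𝓝 (V h)) := by
    have hc : Continuous (fun A : EuclideanSpace ℝ (Fin n) →L[ℝ] EuclideanSpace ℝ (Fin n)
        => A h) := (ContinuousLinearMap.apply ℝ (EuclideanSpace ℝ (Fin n)) h).continuous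
    exact (hc.tendsto V).comp htend
  have h1 : Tendsto (fun k => ⟪h, fderiv ℝ prox (u k) h⟫ - ‖fderiv ℝ prox (u k) h‖ ^ 2)
      atTop (𝓝 (⟪h, V h⟫ - ‖V h‖ ^ 2)) :=
    (tendsto_const_nhds.inner happ).sub ((happ.norm).pow 2)
  have h2 : ∀ k, 0 ≤ ⟪h, fderiv ℝ prox (u k) h⟫ - ‖fderiv ℝ prox (u k) h‖ ^ 2 := by
    intro k
    have := hderiv (u k) (hdiff k) h
    linarith
  have := ge_of_tendsto h1 (Eventually.of_forall h2)
  linarith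

lemma firm_norm_le {n : ℕ}
    (V : EuclideanSpace ℝ (Fin n) →L[ℝ] EuclideanSpace ℝ (Fin n))
    (hV : ∀ h, ‖V h‖ ^ 2 ≤ ⟪h, V h⟫) : ∀ h, ‖V h‖ ≤ ‖h‖ := by
  intro h
  have h1 := hV h
  have h2 : ⟪h, V h⟫ ≤ ‖h‖ * ‖V h‖ := real_inner_le_norm _ _
  nlinarith [norm_nonneg (V h), norm_nonneg h]

-- lower bound for W
lemma W_lower {n : ℕ}
    (V B : EuclideanSpace ℝ (Fin n) →L[ℝ] EuclideanSpace ℝ (Fin n))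
    (hV : ∀ h, ‖V h‖ ^ 2 ≤ ⟪h, V h⟫)
    (m K ν : ℝ) (hm : 0 < m) (hK : 0 ≤ K) (hν : 0 < ν)
    (hBlow : ∀ w, m * ‖w‖ ^ 2 ≤ ⟪w, B w⟫)
    (hBup : ∀ w, ‖B w‖ ≤ K * ‖w‖) :
    ∀ w, (ν * m / (1 + ν * K)) * ‖w‖ ≤ ‖(1 - V * (1 - ν • B)) w‖ := by
  intro w
  have happ : (1 - V * (1 - ν • B)) w = w - V (w - ν • B w) := by
    simp [ContinuousLinearMap.sub_apply, ContinuousLinearMap.mul_apply,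
      ContinuousLinearMap.one_apply, ContinuousLinearMap.smul_apply]
  rw [happ]
  set r := w - V (w - ν • B w) with hr
  have hVw : V (w - ν • B w) = w - r := by rw [hr]; abel
  have h1 := hV (w - ν • B w)
  rw [hVw] at h1
  -- expand
  have e1 : ‖w - r‖ ^ 2 = ‖w‖ ^ 2 - 2 * ⟪w, r⟫ + ‖r‖ ^ 2 := by
    rw [show w - r = w + (-r) by abel, norm_add_sq_real, inner_neg_right, norm_neg]
    ring
  have e2 : ⟪w - ν • B w, w - r⟫
      = ‖w‖ ^ 2 - ⟪w, r⟫ - ν * ⟪B w, w⟫ + ν * ⟪B w, r⟫ := by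
    simp only [inner_sub_left, inner_sub_right, real_inner_smul_left]
    rw [real_inner_self_eq_norm_sq]
    ring
  rw [e1, e2] at h1
  have h2 : ν * (m * ‖w‖ ^ 2) ≤ ν * ⟪w, B w⟫ := by
    have := hBlow w
    nlinarith
  have h3 : ⟪w, r⟫ ≤ ‖w‖ * ‖r‖ := real_inner_le_norm _ _
  have h4 : ⟪B w, r⟫ ≤ ‖B w‖ * ‖r‖ := real_inner_le_norm _ _
  have h5 : ‖B w‖ * ‖r‖ ≤ K * ‖w‖ * ‖r‖ :=
    mul_le_mul_of_nonneg_right (hBup w) (norm_nonneg r)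
  have hsym : ⟪B w, w⟫ = ⟪w, B w⟫ := real_inner_comm _ _
  have hmain : ν * m * ‖w‖ ^ 2 ≤ (1 + ν * K) * (‖w‖ * ‖r‖) := by
    nlinarith [sq_nonneg ‖r‖]
  rcases eq_or_lt_of_le (norm_nonneg w) with hw | hw
  · rw [← hw]
    simp [norm_nonneg]
  · rw [div_mul_eq_mul_div, div_le_iff₀ (by positivity)]
    have hww : 0 < ‖w‖ := hw
    nlinarith [hmain]

lemma grad_contDiff {n : ℕ} (f : EuclideanSpace ℝ (Fin n) → ℝ) (hf : ContDiff ℝ 2 f) :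
    ContDiff ℝ 1 (gradient f) := by
  have h1 : ContDiff ℝ 1 (fderiv ℝ f) := hf.fderiv_right (by norm_num)
  have h2 : ContDiff ℝ 1 (fun p : StrongDual ℝ (EuclideanSpace ℝ (Fin n)) =>
      (InnerProductSpace.toDual ℝ (EuclideanSpace ℝ (Fin n))).symm p) := by
    exact (InnerProductSpace.toDual ℝ (EuclideanSpace ℝ (Fin n))).symm.toContinuousLinearEquiv
      |>.toContinuousLinearMap.contDiff
  exact h2.comp h1

set_option maxHeartbeats 2000000 in
/-- Theorem 4.1, local linear convergence of the hybrid linear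
quasi-Newton method. There exist `ε > 0` and `Δ > 0` such that any sequence started
with `‖x^(1) − x*‖ < ε`, with approximation matrices satisfying
`‖B^(k) − ∇²f(x^(k))‖ < Δ` and updates `W_k (x^(k+1) − x^(k)) = −F_ν(x^(k))` where
`W_k = I − V_k(I − ν B^(k))`, `V_k ∈ ∂_B prox_{νg}(x^(k) − ν∇f(x^(k)))`, has every `W_k`
invertible and satisfies `‖x^(k+1) − x*‖ ≤ (1/2)‖x^(k) − x*‖` for all `k`. -/
theorem statement16 {n : ℕ} (f : EuclideanSpace ℝ (Fin n) → ℝ) (μ : ℝ) (hμ : 0 < μ)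
    (hf : ContDiff ℝ 2 f)
    (hstrong : ∀ x v : EuclideanSpace ℝ (Fin n), μ * ‖v‖ ^ 2 ≤ ⟪v, fderiv ℝ (gradient f) x v⟫)
    (g : EuclideanSpace ℝ (Fin n) → EReal)
    (hg_nebot : ∀ x, g x ≠ ⊥) (hg_proper : ∃ x, g x ≠ ⊤)
    (hg_closed : LowerSemicontinuous g)
    (hg_conv : ∀ x y : EuclideanSpace ℝ (Fin n), ∀ a b : ℝ, 0 ≤ a → 0 ≤ b → a + b = 1 →
      g (a • x + b • y) ≤ (a : EReal) * g x + (b : EReal) * g y)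
    (ν : ℝ) (hν : 0 < ν)
    (prox : EuclideanSpace ℝ (Fin n) → EuclideanSpace ℝ (Fin n))
    (hprox : ∀ w, IsMinOn
      (fun z => (ν : EReal) * g z + ((‖z - w‖ ^ 2 / 2 : ℝ) : EReal)) Set.univ (prox w))
    (xstar : EuclideanSpace ℝ (Fin n)) (hzero : Fnu f prox ν xstar = 0)
    (hLNA : ∀ ε > (0 : ℝ), ∃ δ > (0 : ℝ), ∀ z : EuclideanSpace ℝ (Fin n),
      ‖z - (xstar - ν • gradient f xstar)‖ < δ → ∀ V ∈ Bsubdiff prox z,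
        ‖prox (xstar - ν • gradient f xstar) - prox z - V ((xstar - ν • gradient f xstar) - z)‖
          ≤ ε * ‖(xstar - ν • gradient f xstar) - z‖) :
    ∃ ε > (0 : ℝ), ∃ Δ > (0 : ℝ), ∀ (x : ℕ → EuclideanSpace ℝ (Fin n))
      (B V : ℕ → (EuclideanSpace ℝ (Fin n) →L[ℝ] EuclideanSpace ℝ (Fin n))),
      ‖x 0 - xstar‖ < ε →
      (∀ k, ‖B k - fderiv ℝ (gradient f) (x k)‖ < Δ) →
      (∀ k, V k ∈ Bsubdiff prox (x k - ν • gradient f (x k))) →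
      (∀ k, (1 - V k * (1 - ν • B k)) (x (k + 1) - x k) = -(Fnu f prox ν (x k))) →
      (∀ k, Function.Bijective
        ((1 - V k * (1 - ν • B k) : EuclideanSpace ℝ (Fin n) →L[ℝ] EuclideanSpace ℝ (Fin n)))) ∧
      ∀ k, ‖x (k + 1) - xstar‖ ≤ (1 / 2 : ℝ) * ‖x k - xstar‖ := by
  classical
  -- gradient and Hessian facts
  have hgrad : ContDiff ℝ 1 (gradient f) := grad_contDiff f hf
  set H : EuclideanSpace ℝ (Fin n) →
      (EuclideanSpace ℝ (Fin n) →L[ℝ] EuclideanSpace ℝ (Fin n)) :=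
    fderiv ℝ (gradient f) with hHdef
  have hHcont : Continuous H := hgrad.continuous_fderiv one_ne_zero
  have hdiffgrad : ∀ y, HasFDerivAt (gradient f) (H y) y := fun y =>
    (hgrad.differentiable one_ne_zero y).hasFDerivAt
  -- bound on the Hessian near xstar
  obtain ⟨M0, hM0⟩ := (isCompact_closedBall xstar 1).exists_bound_of_continuousOn
    (hHcont.continuousOn (s := Metric.closedBall xstar 1))
  set M := max M0 0 with hMdef
  have hM : ∀ y ∈ Metric.closedBall xstar 1, ‖H y‖ ≤ M := fun y hy =>
    (hM0 y hy).trans (le_max_left _ _)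
  have hMnn : (0:ℝ) ≤ M := le_max_right _ _
  -- constants
  have hden : (0:ℝ) < 1 + ν * (M + μ) := by positivity
  set c : ℝ := ν * (μ / 2) / (1 + ν * (M + μ)) with hcdef
  have hcpos : 0 < c := by positivity
  set η : ℝ := c / (8 * ν) with hηdef
  have hηpos : 0 < η := by positivity
  -- continuity of the Hessian at xstar
  obtain ⟨r0, hr0pos, hr0⟩ := Metric.continuousAt_iff.mp hHcont.continuousAt (η / 2)
    (by positivity)
  set r1 : ℝ := min r0 1 with hr1def
  have hr1pos : 0 < r1 := lt_min hr0pos one_pos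
  have hr1le1 : r1 ≤ 1 := min_le_right _ _
  -- Lipschitz bound for the gradient on the unit ball
  have hLip : ∀ y ∈ Metric.closedBall xstar 1,
      ‖gradient f y - gradient f xstar‖ ≤ M * ‖y - xstar‖ := by
    intro y hy
    exact Convex.norm_image_sub_le_of_norm_hasFDerivWithin_le
      (fun z _ => (hdiffgrad z).hasFDerivWithinAt) (fun z hz => hM z hz)
      (convex_closedBall _ _) (Metric.mem_closedBall_self (by norm_num)) hy
  -- Taylor estimate for the gradient
  have hTay : ∀ xk ∈ Metric.ball xstar r1,
      ‖gradient f xk - gradient f xstar - H xk (xk - xstar)‖ ≤ η * ‖xk - xstar‖ := by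
    intro xk hxk
    have hball : ∀ y ∈ Metric.ball xstar r1, ‖H y - H xk‖ ≤ η := by
      intro y hy
      have d1 : dist (H y) (H xstar) < η / 2 :=
        hr0 (lt_of_lt_of_le (Metric.mem_ball.mp hy) (min_le_left _ _))
      have d2 : dist (H xk) (H xstar) < η / 2 :=
        hr0 (lt_of_lt_of_le (Metric.mem_ball.mp hxk) (min_le_left _ _))
      calc ‖H y - H xk‖ = dist (H y) (H xk) := (dist_eq_norm _ _).symm
        _ ≤ dist (H y) (H xstar) + dist (H xstar) (H xk) := dist_triangle _ _ _
        _ = dist (H y) (H xstar) + dist (H xk) (H xstar) := by rw [dist_comm (H xstar)]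
        _ ≤ η := by linarith
    have hmv := Convex.norm_image_sub_le_of_norm_hasFDerivWithin_le
      (f := fun y => gradient f y - H xk y) (f' := fun y => H y - H xk)
      (fun z _ => ((hdiffgrad z).sub ((H xk).hasFDerivAt)).hasFDerivWithinAt)
      hball (convex_ball _ _) (Metric.mem_ball_self hr1pos) hxk
    have heq : gradient f xk - H xk xk - (gradient f xstar - H xk xstar)
        = gradient f xk - gradient f xstar - H xk (xk - xstar) := by
      rw [map_sub]; abel
    rw [heq] at hmv
    exact hmv
  -- linear Newton approximation constants
  have hνM : (0:ℝ) < 1 + ν * M := by positivity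
  set ε0 : ℝ := c / (8 * (1 + ν * M)) with hε0def
  have hε0pos : 0 < ε0 := by positivity
  obtain ⟨δ, hδpos, hLNAp⟩ := hLNA ε0 hε0pos
  set Δ : ℝ := min (μ / 2) (c / (8 * ν)) with hΔdef
  have hΔpos : 0 < Δ := lt_min (by positivity) (by positivity)
  set ε : ℝ := min r1 (δ / (1 + ν * M)) with hεdef
  have hεpos : 0 < ε := lt_min hr1pos (by positivity)
  refine ⟨ε, hεpos, Δ, hΔpos, ?_⟩
  intro x B V hx0 hB hVmem hstep
  -- firm nonexpansiveness of prox and consequences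
  have hfirm := firm_nonexp g hg_nebot hg_proper hg_conv ν hν prox hprox
  have hVfirm : ∀ k, ∀ h, ‖V k h‖ ^ 2 ≤ ⟪h, V k h⟫ := fun k =>
    bsubdiff_firm prox (fun u hu => fderiv_firm prox hfirm u hu) _ (V k) (hVmem k)
  have hVnorm : ∀ k h, ‖V k h‖ ≤ ‖h‖ := fun k => firm_norm_le _ (hVfirm k)
  have hfix : prox (xstar - ν • gradient f xstar) = xstar := by
    have h0 := hzero
    unfold Fnu at h0
    exact (sub_eq_zero.mp h0).symm
  -- the per-step estimates
  have step : ∀ k, ‖x k - xstar‖ < ε →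
      Function.Bijective
        ((1 - V k * (1 - ν • B k) :
          EuclideanSpace ℝ (Fin n) →L[ℝ] EuclideanSpace ℝ (Fin n))) ∧
      ‖x (k + 1) - xstar‖ ≤ (1 / 2 : ℝ) * ‖x k - xstar‖ := by
    intro k hxk
    have hxr1 : ‖x k - xstar‖ < r1 := lt_of_lt_of_le hxk (min_le_left _ _)
    have hxball : x k ∈ Metric.ball xstar r1 := by
      rw [Metric.mem_ball, dist_eq_norm]; exact hxr1
    have hxcball : x k ∈ Metric.closedBall xstar 1 := by
      rw [Metric.mem_closedBall, dist_eq_norm]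
      exact le_trans (le_of_lt hxr1) hr1le1
    -- bounds on B k
    have hBk := hB k
    have hBkΔ : ‖B k - H (x k)‖ < Δ := hBk
    have hBlow : ∀ w, (μ / 2) * ‖w‖ ^ 2 ≤ ⟪w, B k w⟫ := by
      intro w
      have h1 := hstrong (x k) w
      have h2 : |⟪w, B k w - H (x k) w⟫| ≤ ‖B k - H (x k)‖ * ‖w‖ ^ 2 := by
        calc |⟪w, B k w - H (x k) w⟫| ≤ ‖w‖ * ‖B k w - H (x k) w‖ :=
              abs_real_inner_le_norm _ _
          _ = ‖w‖ * ‖(B k - H (x k)) w‖ := by rw [ContinuousLinearMap.sub_apply]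
          _ ≤ ‖w‖ * (‖B k - H (x k)‖ * ‖w‖) := by
              gcongr
              exact (B k - H (x k)).le_opNorm w
          _ = ‖B k - H (x k)‖ * ‖w‖ ^ 2 := by ring
      have h3 : ⟪w, B k w⟫ = ⟪w, H (x k) w⟫ + ⟪w, B k w - H (x k) w⟫ := by
        rw [← inner_add_right]
        congr 1
        abel
      have h4 : ‖B k - H (x k)‖ * ‖w‖ ^ 2 ≤ (μ / 2) * ‖w‖ ^ 2 := by
        have : ‖B k - H (x k)‖ ≤ μ / 2 := le_trans hBkΔ.le (min_le_left _ _)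
        nlinarith [sq_nonneg ‖w‖]
      have h5 := abs_le.mp h2
      nlinarith [h1, h3, h4, h5.1]
    have hBup : ∀ w, ‖B k w‖ ≤ (M + μ) * ‖w‖ := by
      intro w
      calc ‖B k w‖ = ‖(B k - H (x k)) w + H (x k) w‖ := by
            rw [ContinuousLinearMap.sub_apply]; congr 1; abel
        _ ≤ ‖(B k - H (x k)) w‖ + ‖H (x k) w‖ := norm_add_le _ _
        _ ≤ ‖B k - H (x k)‖ * ‖w‖ + ‖H (x k)‖ * ‖w‖ := by
            gcongr
            · exact (B k - H (x k)).le_opNorm w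
            · exact (H (x k)).le_opNorm w
        _ ≤ (μ / 2) * ‖w‖ + M * ‖w‖ := by
            gcongr
            · exact le_trans hBkΔ.le (min_le_left _ _)
            · exact hM _ hxcball
        _ ≤ (M + μ) * ‖w‖ := by nlinarith [norm_nonneg w, hμ.le]
    have hW := W_lower (V k) (B k) (hVfirm k) (μ / 2) (M + μ) ν (by positivity)
      (by positivity) hν hBlow hBup
    have hWc : ∀ w, c * ‖w‖ ≤ ‖(1 - V k * (1 - ν • B k)) w‖ := by
      intro w
      have := hW w
      rw [hcdef]
      exact this
    -- bijectivity
    have hinj : Function.Injective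
        ((1 - V k * (1 - ν • B k) :
          EuclideanSpace ℝ (Fin n) →L[ℝ] EuclideanSpace ℝ (Fin n))) := by
      intro a b hab
      have hz : (1 - V k * (1 - ν • B k)) (a - b) = 0 := by
        rw [map_sub, hab, sub_self]
      have := hWc (a - b)
      rw [hz, norm_zero] at this
      have : ‖a - b‖ ≤ 0 := by nlinarith [norm_nonneg (a - b)]
      have : a - b = 0 := by
        rw [← norm_le_zero_iff]
        exact this
      exact sub_eq_zero.mp this
    have hsurj : Function.Surjective
        ((1 - V k * (1 - ν • B k) :
          EuclideanSpace ℝ (Fin n) →L[ℝ] EuclideanSpace ℝ (Fin n))) := by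
      have := LinearMap.surjective_of_injective
        (f := ((1 - V k * (1 - ν • B k) :
          EuclideanSpace ℝ (Fin n) →L[ℝ] EuclideanSpace ℝ (Fin n)) :
          EuclideanSpace ℝ (Fin n) →ₗ[ℝ] EuclideanSpace ℝ (Fin n))) hinj
      exact this
    refine ⟨⟨hinj, hsurj⟩, ?_⟩
    -- contraction estimate
    have hzd : (x k - ν • gradient f (x k)) - (xstar - ν • gradient f xstar)
        = (x k - xstar) - ν • (gradient f (x k) - gradient f xstar) := by
      module
    have hLipk : ‖gradient f (x k) - gradient f xstar‖ ≤ M * ‖x k - xstar‖ :=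
      hLip (x k) hxcball
    have hznorm : ‖(x k - ν • gradient f (x k)) - (xstar - ν • gradient f xstar)‖
        ≤ (1 + ν * M) * ‖x k - xstar‖ := by
      rw [hzd]
      calc ‖(x k - xstar) - ν • (gradient f (x k) - gradient f xstar)‖
          ≤ ‖x k - xstar‖ + ‖ν • (gradient f (x k) - gradient f xstar)‖ := norm_sub_le _ _
        _ = ‖x k - xstar‖ + ν * ‖gradient f (x k) - gradient f xstar‖ := by
            rw [norm_smul, Real.norm_eq_abs, abs_of_pos hν]
        _ ≤ ‖x k - xstar‖ + ν * (M * ‖x k - xstar‖) := by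
            gcongr
        _ = (1 + ν * M) * ‖x k - xstar‖ := by ring
    have hzlt : ‖(x k - ν • gradient f (x k)) - (xstar - ν • gradient f xstar)‖ < δ := by
      have h6 : ‖x k - xstar‖ < δ / (1 + ν * M) := lt_of_lt_of_le hxk (min_le_right _ _)
      have h7 : (1 + ν * M) * ‖x k - xstar‖ < δ := by
        rw [← lt_div_iff₀' hνM]
        exact h6
      linarith
    have hT1 := hLNAp (x k - ν • gradient f (x k)) hzlt (V k) (hVmem k)
    rw [hfix] at hT1
    -- rewrite hT1 with reversed signs
    have hT1' : ‖prox (x k - ν • gradient f (x k)) - xstar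
        - V k ((x k - ν • gradient f (x k)) - (xstar - ν • gradient f xstar))‖
        ≤ ε0 * ‖(x k - ν • gradient f (x k)) - (xstar - ν • gradient f xstar)‖ := by
      have hrev : prox (x k - ν • gradient f (x k)) - xstar
          - V k ((x k - ν • gradient f (x k)) - (xstar - ν • gradient f xstar))
          = -(xstar - prox (x k - ν • gradient f (x k))
            - V k ((xstar - ν • gradient f xstar) - (x k - ν • gradient f (x k)))) := by
        rw [show (xstar - ν • gradient f xstar) - (x k - ν • gradient f (x k))
            = -((x k - ν • gradient f (x k)) - (xstar - ν • gradient f xstar)) by abel,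
          map_neg]
        abel
      rw [hrev, norm_neg,
        show ‖(x k - ν • gradient f (x k)) - (xstar - ν • gradient f xstar)‖
          = ‖(xstar - ν • gradient f xstar) - (x k - ν • gradient f (x k))‖ from
          norm_sub_rev _ _]
      exact hT1
    -- the key identity
    have hWid : (1 - V k * (1 - ν • B k)) (x (k + 1) - xstar)
        = (prox (x k - ν • gradient f (x k)) - xstar
            - V k ((x k - ν • gradient f (x k)) - (xstar - ν • gradient f xstar)))
          + ν • (V k (B k (x k - xstar)
            - (gradient f (x k) - gradient f xstar))) := by
      have h1 : x (k + 1) - xstar = (x (k + 1) - x k) + (x k - xstar) := by abel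
      rw [h1, map_add, hstep k]
      unfold Fnu
      simp only [ContinuousLinearMap.sub_apply, ContinuousLinearMap.mul_apply,
        ContinuousLinearMap.one_apply, ContinuousLinearMap.smul_apply, map_sub, map_smul]
      module
    -- estimate the error term
    have hq : ‖B k (x k - xstar) - (gradient f (x k) - gradient f xstar)‖
        ≤ (Δ + η) * ‖x k - xstar‖ := by
      have hsplit : B k (x k - xstar) - (gradient f (x k) - gradient f xstar)
          = (B k - H (x k)) (x k - xstar)
            - (gradient f (x k) - gradient f xstar - H (x k) (x k - xstar)) := by
        rw [ContinuousLinearMap.sub_apply]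
        abel
      rw [hsplit]
      calc ‖(B k - H (x k)) (x k - xstar)
            - (gradient f (x k) - gradient f xstar - H (x k) (x k - xstar))‖
          ≤ ‖(B k - H (x k)) (x k - xstar)‖
            + ‖gradient f (x k) - gradient f xstar - H (x k) (x k - xstar)‖ :=
            norm_sub_le _ _
        _ ≤ ‖B k - H (x k)‖ * ‖x k - xstar‖ + η * ‖x k - xstar‖ := by
            gcongr
            · exact (B k - H (x k)).le_opNorm _
            · exact hTay (x k) hxball
        _ ≤ Δ * ‖x k - xstar‖ + η * ‖x k - xstar‖ := by
            gcongr
        _ = (Δ + η) * ‖x k - xstar‖ := by ring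
    have hWnorm : ‖(1 - V k * (1 - ν • B k)) (x (k + 1) - xstar)‖
        ≤ (ε0 * (1 + ν * M) + ν * (Δ + η)) * ‖x k - xstar‖ := by
      rw [hWid]
      calc ‖(prox (x k - ν • gradient f (x k)) - xstar
            - V k ((x k - ν • gradient f (x k)) - (xstar - ν • gradient f xstar)))
          + ν • (V k (B k (x k - xstar) - (gradient f (x k) - gradient f xstar)))‖
          ≤ ‖prox (x k - ν • gradient f (x k)) - xstar
            - V k ((x k - ν • gradient f (x k)) - (xstar - ν • gradient f xstar))‖
            + ‖ν • (V k (B k (x k - xstar) - (gradient f (x k) - gradient f xstar)))‖ :=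
            norm_add_le _ _
        _ ≤ ε0 * ‖(x k - ν • gradient f (x k)) - (xstar - ν • gradient f xstar)‖
            + ν * ‖V k (B k (x k - xstar) - (gradient f (x k) - gradient f xstar))‖ := by
            rw [norm_smul, Real.norm_eq_abs, abs_of_pos hν]
            gcongr
        _ ≤ ε0 * ((1 + ν * M) * ‖x k - xstar‖)
            + ν * ((Δ + η) * ‖x k - xstar‖) := by
            gcongr
            exact le_trans (hVnorm k _) hq
        _ = (ε0 * (1 + ν * M) + ν * (Δ + η)) * ‖x k - xstar‖ := by ring
    -- combine
    have hconstfin : ε0 * (1 + ν * M) + ν * (Δ + η) ≤ c / 2 := by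
      have e1 : ε0 * (1 + ν * M) = c / 8 := by
        rw [hε0def]
        field_simp
        try ring
      have e2 : ν * η = c / 8 := by
        rw [hηdef]
        field_simp
        try ring
      have e3 : ν * Δ ≤ c / 8 := by
        have : Δ ≤ c / (8 * ν) := min_le_right _ _
        calc ν * Δ ≤ ν * (c / (8 * ν)) := by gcongr
          _ = c / 8 := by field_simp; try ring
      nlinarith
    have hfinal := le_trans (hWc (x (k + 1) - xstar)) hWnorm
    have hconc : c * ‖x (k + 1) - xstar‖ ≤ (c / 2) * ‖x k - xstar‖ := by
      calc c * ‖x (k + 1) - xstar‖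
          ≤ (ε0 * (1 + ν * M) + ν * (Δ + η)) * ‖x k - xstar‖ := hfinal
        _ ≤ (c / 2) * ‖x k - xstar‖ := by
            nlinarith [norm_nonneg (x k - xstar), hconstfin]
    have := (mul_le_mul_iff_of_pos_left hcpos).mp (by linarith : c * ‖x (k + 1) - xstar‖
      ≤ c * ((1 / 2) * ‖x k - xstar‖))
    linarith [this]
  -- induction: iterates remain in the ball
  have hball : ∀ k, ‖x k - xstar‖ < ε := by
    intro k
    induction k with
    | zero => exact hx0
    | succ k ih =>
        have := (step k ih).2
        have hnn := norm_nonneg (x k - xstar)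
        linarith
  exact ⟨fun k => (step k (hball k)).1, fun k => (step k (hball k)).2⟩
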